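/- arXiv:2506.23165 — 4 statements merged into one kernel-verified Lean document; each statement's English description precedes it below -/
import Mathlib

section
/- Under the stated integrability assumptions, h(x) − h(y) − ∫_{S×A} (x(s,a) − y(s,a))·(log y(s,a) − log y_S(s)) d(μ⊗ν) = ∫_{S×A} x(s,a)·log( (x(s,a)/x_S(s)) / (y(s,a)/y_S(s)) ) d(μ⊗ν); that is, the continuous pseudo-KL divergence of occupancy is the Bregman divergence generated by h, whose gradient at y is the function (s,a) ↦ log y(s,a) − log y_S(s). -/
open MeasureTheory

/-- Fubini-type lemma: for positive `x` with marginal `xS` and a measurable `g : S → ℝ`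
with `xS * g` integrable, the function `z ↦ x z * g z.1` is integrable on the product
and its integral equals `∫ xS * g dμ`. -/
lemma key_fubini
    {S A : Type*} [MeasurableSpace S] [MeasurableSpace A]
    (μ : Measure S) (ν : Measure A) [SigmaFinite μ] [SigmaFinite ν]
    (x : S × A → ℝ) (hxmeas : Measurable x) (hxpos : ∀ z, 0 < x z)
    (xS : S → ℝ) (hxS : ∀ s, xS s = ∫ a, x (s, a) ∂ν)
    (hxfin : ∀ s, Integrable (fun a => x (s, a)) ν)
    (g : S → ℝ) (hg : Measurable g)
    (hint : Integrable (fun s => xS s * g s) μ) :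
    Integrable (fun z => x z * g z.1) (μ.prod ν) ∧
      ∫ z, x z * g z.1 ∂(μ.prod ν) = ∫ s, xS s * g s ∂μ := by
  have hxSnn : ∀ s, 0 ≤ xS s := fun s => by
    rw [hxS s]; exact integral_nonneg fun a => (hxpos _).le
  have hmeas : Measurable (fun z : S × A => x z * g z.1) :=
    hxmeas.mul (hg.comp measurable_fst)
  have hnorm : ∀ s, (∫ a, ‖x (s, a) * g s‖ ∂ν) = xS s * |g s| := by
    intro s
    have : ∀ a, ‖x (s, a) * g s‖ = x (s, a) * |g s| := fun a => by
      rw [norm_mul, Real.norm_eq_abs, Real.norm_eq_abs, abs_of_pos (hxpos _)]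
    simp_rw [this]
    rw [integral_mul_const, hxS s]
  have hI : Integrable (fun z => x z * g z.1) (μ.prod ν) := by
    rw [integrable_prod_iff hmeas.aestronglyMeasurable]
    constructor
    · exact Filter.Eventually.of_forall fun s => (hxfin s).mul_const (g s)
    · have : (fun s => ∫ a, ‖x (s, a) * g s‖ ∂ν) = fun s => xS s * |g s| :=
        funext hnorm
      rw [this]
      have habs : (fun s => xS s * |g s|) = fun s => |xS s * g s| := funext fun s => by
        rw [abs_mul, abs_of_nonneg (hxSnn s)]
      rw [habs]
      exact hint.abs
  refine ⟨hI, ?_⟩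
  rw [integral_prod _ hI]
  congr 1
  funext s
  show (∫ a, x (s, a) * g s ∂ν) = xS s * g s
  rw [integral_mul_const, hxS s]

/-- The continuous pseudo-KL divergence of occupancy is the Bregman divergence generated by
`h(x) = ∫ x log x d(μ⊗ν) - ∫ x_S log x_S dμ`, whose gradient at `y` is
`(s,a) ↦ log y(s,a) - log y_S(s)`:
`h(x) - h(y) - ∫ (x - y)(log y - log y_S) d(μ⊗ν)
  = ∫ x log((x/x_S)/(y/y_S)) d(μ⊗ν)`. -/
theorem continuous_pseudo_KL_is_bregman
    {S A : Type*} [MeasurableSpace S] [MeasurableSpace A]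
    (μ : Measure S) (ν : Measure A) [SigmaFinite μ] [SigmaFinite ν]
    (x y : S × A → ℝ) (hxmeas : Measurable x) (hymeas : Measurable y)
    (hxpos : ∀ z, 0 < x z) (hypos : ∀ z, 0 < y z)
    (xS yS : S → ℝ)
    (hxS : ∀ s, xS s = ∫ a, x (s, a) ∂ν)
    (hyS : ∀ s, yS s = ∫ a, y (s, a) ∂ν)
    (hxfin : ∀ s, Integrable (fun a => x (s, a)) ν)
    (hyfin : ∀ s, Integrable (fun a => y (s, a)) ν)
    (hxSpos : ∀ s, 0 < xS s) (hySpos : ∀ s, 0 < yS s)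
    (h1 : Integrable (fun z => x z * Real.log (x z)) (μ.prod ν))
    (h2 : Integrable (fun z => y z * Real.log (y z)) (μ.prod ν))
    (h3 : Integrable (fun z => x z * Real.log (y z)) (μ.prod ν))
    (h4 : Integrable (fun z => x z * Real.log (yS z.1)) (μ.prod ν))
    (h5 : Integrable (fun z => y z * Real.log (yS z.1)) (μ.prod ν))
    (h6 : Integrable (fun s => xS s * Real.log (xS s)) μ)
    (h7 : Integrable (fun s => yS s * Real.log (yS s)) μ) :
    ((∫ z, x z * Real.log (x z) ∂(μ.prod ν)) - ∫ s, xS s * Real.log (xS s) ∂μ)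
      - ((∫ z, y z * Real.log (y z) ∂(μ.prod ν)) - ∫ s, yS s * Real.log (yS s) ∂μ)
      - ∫ z, (x z - y z) * (Real.log (y z) - Real.log (yS z.1)) ∂(μ.prod ν)
    = ∫ z, x z * Real.log ((x z / xS z.1) / (y z / yS z.1)) ∂(μ.prod ν) := by
  have hxSmeas : Measurable xS := by
    have h := (hxmeas.stronglyMeasurable.integral_prod_right' (ν := ν)).measurable
    have : xS = fun s => ∫ a, x (s, a) ∂ν := funext hxS
    rw [this]; exact h
  have hySmeas : Measurable yS := by
    have h := (hymeas.stronglyMeasurable.integral_prod_right' (ν := ν)).measurable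
    have : yS = fun s => ∫ a, y (s, a) ∂ν := funext hyS
    rw [this]; exact h
  obtain ⟨hA, hAeq⟩ := key_fubini μ ν x hxmeas hxpos xS hxS hxfin
    (fun s => Real.log (xS s)) (Real.measurable_log.comp hxSmeas) h6
  obtain ⟨hB, hBeq⟩ := key_fubini μ ν y hymeas hypos yS hyS hyfin
    (fun s => Real.log (yS s)) (Real.measurable_log.comp hySmeas) h7
  -- expand the Bregman correction term
  have hsplit : ∫ z, (x z - y z) * (Real.log (y z) - Real.log (yS z.1)) ∂(μ.prod ν)
      = (∫ z, x z * Real.log (y z) ∂(μ.prod ν)) - (∫ z, x z * Real.log (yS z.1) ∂(μ.prod ν))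
        - ((∫ z, y z * Real.log (y z) ∂(μ.prod ν)) - ∫ z, y z * Real.log (yS z.1) ∂(μ.prod ν)) := by
    have : (fun z => (x z - y z) * (Real.log (y z) - Real.log (yS z.1)))
        = fun z => (x z * Real.log (y z) - x z * Real.log (yS z.1))
          - (y z * Real.log (y z) - y z * Real.log (yS z.1)) := by
      funext z; ring
    have h34 : Integrable (fun z => x z * Real.log (y z) - x z * Real.log (yS z.1)) (μ.prod ν) :=
      h3.sub h4
    have h25 : Integrable (fun z => y z * Real.log (y z) - y z * Real.log (yS z.1)) (μ.prod ν) :=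
      h2.sub h5
    rw [this, integral_sub h34 h25, integral_sub h3 h4, integral_sub h2 h5]
  -- expand the RHS
  have hlog : (fun z : S × A => x z * Real.log ((x z / xS z.1) / (y z / yS z.1)))
      = fun z => (x z * Real.log (x z) - x z * Real.log (xS z.1))
        - (x z * Real.log (y z) - x z * Real.log (yS z.1)) := by
    funext z
    rw [Real.log_div (div_ne_zero (hxpos z).ne' (hxSpos z.1).ne')
        (div_ne_zero (hypos z).ne' (hySpos z.1).ne'),
      Real.log_div (hxpos z).ne' (hxSpos z.1).ne',
      Real.log_div (hypos z).ne' (hySpos z.1).ne']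
    ring
  have h1A : Integrable (fun z => x z * Real.log (x z) - x z * Real.log (xS z.1)) (μ.prod ν) :=
    h1.sub hA
  have h34' : Integrable (fun z => x z * Real.log (y z) - x z * Real.log (yS z.1)) (μ.prod ν) :=
    h3.sub h4
  rw [hlog, integral_sub h1A h34', integral_sub h1 hA, integral_sub h3 h4, hsplit, hAeq, hBeq]
  ring
end

section
/- First performance difference lemma across transition kernels: for any two transition kernels p and p' and any policy π, V_{π,p}(ρ) − V_{π,p'}(ρ) = (1/(1−γ)) Σ_{s∈S} d_ρ^{π,p'}(s) Σ_{a∈A} π(a|s) Σ_{s'∈S} (p(s'|s,a) − p'(s'|s,a))·(c(s,a,s') + γ·V_{π,p}(s')). -/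
open Finset

variable {S A : Type*}

/-- Expected one-step cost `c_{π,p}(s) = Σ_a π(a|s) Σ_{s'} p(s'|s,a) c(s,a,s')`. -/
noncomputable def cPi [Fintype S] [Fintype A] (π : S → A → ℝ) (p : S → A → S → ℝ)
    (c : S → A → S → ℝ) (s : S) : ℝ :=
  ∑ a, π s a * ∑ s', p s a s' * c s a s'

/-- Induced state-transition matrix `M_{π,p}(s,s') = Σ_a π(a|s) p(s'|s,a)`. -/
noncomputable def matPi [Fintype A] (π : S → A → ℝ) (p : S → A → S → ℝ) :
    Matrix S S ℝ :=
  Matrix.of fun s s' => ∑ a, π s a * p s a s'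

/-- Discounted value function `V_{π,p}(s) = Σ_{l} γ^l ((M_{π,p})^l c_{π,p})(s)`. -/
noncomputable def Vf [Fintype S] [Fintype A] [DecidableEq S] (γ : ℝ) (π : S → A → ℝ)
    (p : S → A → S → ℝ) (c : S → A → S → ℝ) (s : S) : ℝ :=
  ∑' l : ℕ, γ ^ l * ((matPi π p ^ l).mulVec (cPi π p c)) s

/-- Value from an initial distribution, `V_{π,p}(ρ) = Σ_s ρ(s) V_{π,p}(s)`. -/
noncomputable def Vrho [Fintype S] [Fintype A] [DecidableEq S] (γ : ℝ) (ρ : S → ℝ)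
    (π : S → A → ℝ) (p : S → A → S → ℝ) (c : S → A → S → ℝ) : ℝ :=
  ∑ s, ρ s * Vf γ π p c s

/-- Discounted state visitation distribution
`d_ρ^{π,p}(s) = (1-γ) Σ_l γ^l Σ_{s₀} ρ(s₀) ((M_{π,p})^l)(s₀,s)`. -/
noncomputable def dvisit [Fintype S] [Fintype A] [DecidableEq S] (γ : ℝ) (ρ : S → ℝ)
    (π : S → A → ℝ) (p : S → A → S → ℝ) (s : S) : ℝ :=
  (1 - γ) * ∑' l : ℕ, γ ^ l * ∑ s₀, ρ s₀ * (matPi π p ^ l) s₀ s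

set_option linter.unusedSectionVars false

section PDLHelpers
open Filter
variable {S : Type*} [Fintype S] [DecidableEq S]

def StochMat (M : Matrix S S ℝ) : Prop := (∀ s s', 0 ≤ M s s') ∧ (∀ s, ∑ s', M s s' = 1)

lemma stoch_pow {M : Matrix S S ℝ} (h : StochMat M) (l : ℕ) : StochMat (M ^ l) := by
  induction l with
  | zero =>
    refine ⟨fun s s' => ?_, fun s => ?_⟩
    · simp only [pow_zero, Matrix.one_apply]; positivity
    · simp [pow_zero, Matrix.one_apply]
  | succ l ih =>
    rw [pow_succ]
    refine ⟨fun s s' => ?_, fun s => ?_⟩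
    · exact Finset.sum_nonneg fun t _ => mul_nonneg (ih.1 s t) (h.1 t s')
    · simp only [Matrix.mul_apply]
      rw [Finset.sum_comm]
      simp only [← Finset.mul_sum, h.2]
      simpa using ih.2 s

lemma stoch_entry_le_one {M : Matrix S S ℝ} (h : StochMat M) (s s' : S) : M s s' ≤ 1 :=
  (Finset.single_le_sum (fun i _ => h.1 s i) (Finset.mem_univ s')).trans_eq (h.2 s)

lemma mulVec_abs_le {M : Matrix S S ℝ} (h : StochMat M) (v : S → ℝ) (s : S) :
    |M.mulVec v s| ≤ ∑ s', |v s'| := by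
  have : |M.mulVec v s| ≤ ∑ s', |M s s' * v s'| := by
    simpa [Matrix.mulVec, dotProduct] using Finset.abs_sum_le_sum_abs (fun s' => M s s' * v s') univ
  refine this.trans (Finset.sum_le_sum fun s' _ => ?_)
  rw [abs_mul, abs_of_nonneg (h.1 s s')]
  exact mul_le_of_le_one_left (abs_nonneg _) (stoch_entry_le_one h s s')

lemma summable_geom_bdd {γ : ℝ} (hγ0 : 0 ≤ γ) (hγ1 : γ < 1) {f : ℕ → ℝ} {C : ℝ}
    (h : ∀ l, |f l| ≤ C) : Summable (fun l => γ ^ l * f l) := by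
  refine Summable.of_norm_bounded
    ((summable_geometric_of_lt_one hγ0 hγ1).mul_left C) fun l => ?_
  rw [Real.norm_eq_abs, abs_mul, abs_of_nonneg (pow_nonneg hγ0 l), mul_comm]
  exact mul_le_mul_of_nonneg_right (h l) (pow_nonneg hγ0 l)

lemma summable_pow_mulVec {γ : ℝ} (hγ0 : 0 ≤ γ) (hγ1 : γ < 1) {M : Matrix S S ℝ}
    (h : StochMat M) (v : S → ℝ) (s : S) :
    Summable (fun l => γ ^ l * (M ^ l).mulVec v s) :=
  summable_geom_bdd hγ0 hγ1 (fun l => mulVec_abs_le (stoch_pow h l) v s)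

lemma pow_mulVec_sub {γ : ℝ} {M : Matrix S S ℝ} (l : ℕ) (v : S → ℝ) (s : S) :
    (M ^ l).mulVec (fun t => v t - γ * M.mulVec v t) s
      = (M ^ l).mulVec v s - γ * (M ^ (l + 1)).mulVec v s := by
  have h1 : (M ^ (l + 1)).mulVec v = (M ^ l).mulVec (M.mulVec v) := by
    rw [pow_succ, ← Matrix.mulVec_mulVec]
  rw [h1]
  simp only [Matrix.mulVec, dotProduct, mul_sub, Finset.sum_sub_distrib]
  congr 1
  rw [Finset.mul_sum]
  exact Finset.sum_congr rfl fun t _ => by ring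

lemma telescope {γ : ℝ} (hγ0 : 0 ≤ γ) (hγ1 : γ < 1) {M : Matrix S S ℝ} (h : StochMat M)
    (v : S → ℝ) (s : S) :
    ∑' l : ℕ, γ ^ l * (M ^ l).mulVec (fun t => v t - γ * M.mulVec v t) s = v s := by
  set w := fun t => v t - γ * M.mulVec v t with hw
  have hsum : Summable (fun l => γ ^ l * (M ^ l).mulVec w s) :=
    summable_pow_mulVec hγ0 hγ1 h w s
  have hpart : ∀ n, ∑ l ∈ Finset.range n, γ ^ l * (M ^ l).mulVec w s
      = v s - γ ^ n * (M ^ n).mulVec v s := by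
    intro n
    induction n with
    | zero => simp [Matrix.one_mulVec]
    | succ n ih =>
      rw [Finset.sum_range_succ, ih, hw, pow_mulVec_sub n v s, pow_succ]
      ring
  have h0 : Tendsto (fun n => γ ^ n * (M ^ n).mulVec v s) atTop (nhds 0) := by
    refine squeeze_zero_norm (a := fun n => (∑ s', |v s'|) * γ ^ n) (fun n => ?_) ?_
    · 
      rw [Real.norm_eq_abs, abs_mul, abs_of_nonneg (pow_nonneg hγ0 n), mul_comm]
      exact mul_le_mul_of_nonneg_right (mulVec_abs_le (stoch_pow h n) v s) (pow_nonneg hγ0 n)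
    · simpa using (tendsto_pow_atTop_nhds_zero_of_lt_one hγ0 hγ1).const_mul (∑ s', |v s'|)
  have hlim : Tendsto (fun n => v s - γ ^ n * (M ^ n).mulVec v s) atTop (nhds (v s)) := by
    simpa using tendsto_const_nhds.sub h0
  have : HasSum (fun l => γ ^ l * (M ^ l).mulVec w s) (v s) :=
    (hsum.hasSum_iff_tendsto_nat).2 (by simpa only [hpart] using hlim)
  exact this.tsum_eq

lemma bellman {γ : ℝ} (hγ0 : 0 ≤ γ) (hγ1 : γ < 1) {M : Matrix S S ℝ} (h : StochMat M)
    (cv : S → ℝ) (s : S) :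
    ∑' l : ℕ, γ ^ l * (M ^ l).mulVec cv s
      = cv s + γ * M.mulVec (fun s' => ∑' l : ℕ, γ ^ l * (M ^ l).mulVec cv s') s := by
  rw [Summable.tsum_eq_zero_add (summable_pow_mulVec hγ0 hγ1 h cv s)]
  simp only [pow_zero, one_mul, Matrix.one_mulVec]
  congr 1
  have step : ∀ l : ℕ, γ ^ (l + 1) * (M ^ (l + 1)).mulVec cv s
      = ∑ s', γ * (M s s' * (γ ^ l * (M ^ l).mulVec cv s')) := by
    intro l
    rw [pow_succ' M, ← Matrix.mulVec_mulVec]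
    set u := (M ^ l).mulVec cv with hu
    simp only [Matrix.mulVec, dotProduct, Finset.mul_sum]
    exact Finset.sum_congr rfl fun t _ => by ring
  calc ∑' l : ℕ, γ ^ (l + 1) * (M ^ (l + 1)).mulVec cv s
      = ∑' l : ℕ, ∑ s', γ * (M s s' * (γ ^ l * (M ^ l).mulVec cv s')) := tsum_congr step
    _ = ∑ s', ∑' l : ℕ, γ * (M s s' * (γ ^ l * (M ^ l).mulVec cv s')) := by
        refine Summable.tsum_finsetSum fun s' _ => ?_
        exact ((summable_pow_mulVec hγ0 hγ1 h cv s').mul_left (M s s')).mul_left γ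
    _ = γ * ∑ s', M s s' * ∑' l : ℕ, γ ^ l * (M ^ l).mulVec cv s' := by
        rw [Finset.mul_sum]
        refine Finset.sum_congr rfl fun s' _ => ?_
        rw [tsum_mul_left, tsum_mul_left]
    _ = γ * M.mulVec (fun s' => ∑' l : ℕ, γ ^ l * (M ^ l).mulVec cv s') s := by
        congr 1

end PDLHelpers

section PDLHelpers2
variable {S A : Type*} [Fintype S] [Fintype A] [DecidableEq S]
lemma matPi_stoch (π : S → A → ℝ) (hπ0 : ∀ s a, 0 ≤ π s a) (hπ1 : ∀ s, ∑ a, π s a = 1)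
    (p : S → A → S → ℝ) (hp0 : ∀ s a s', 0 ≤ p s a s') (hp1 : ∀ s a, ∑ s', p s a s' = 1) :
    StochMat (matPi π p) := by
  constructor
  · intro s s'
    exact Finset.sum_nonneg fun a _ => mul_nonneg (hπ0 s a) (hp0 s a s')
  · intro s
    rw [show ∑ s', matPi π p s s' = ∑ s', ∑ a, π s a * p s a s' from rfl, Finset.sum_comm]
    simp only [← Finset.mul_sum, hp1, mul_one]
    exact hπ1 s

lemma mulVec_matPi (π : S → A → ℝ) (p : S → A → S → ℝ) (v : S → ℝ) (s : S) :
    (matPi π p).mulVec v s = ∑ a, π s a * ∑ s', p s a s' * v s' := by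
  simp only [Matrix.mulVec, dotProduct, matPi, Matrix.of_apply, Finset.sum_mul,
    Finset.mul_sum]
  rw [Finset.sum_comm]
  exact Finset.sum_congr rfl fun a _ => Finset.sum_congr rfl fun s' _ => by ring

lemma mulVec_sub_pt (M : Matrix S S ℝ) (f g : S → ℝ) (s : S) :
    M.mulVec (fun t => f t - g t) s = M.mulVec f s - M.mulVec g s := by
  simp [Matrix.mulVec, dotProduct, mul_sub, Finset.sum_sub_distrib]
end PDLHelpers2

/-- First performance difference lemma across transition kernels:
`V_{π,p}(ρ) - V_{π,p'}(ρ) = (1/(1-γ)) Σ_s d_ρ^{π,p'}(s) Σ_a π(a|s)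
  Σ_{s'} (p(s'|s,a) - p'(s'|s,a)) (c(s,a,s') + γ V_{π,p}(s'))`. -/
theorem performance_difference_transitions_first
    [Fintype S] [Fintype A] [DecidableEq S] [Nonempty S] [Nonempty A]
    (γ : ℝ) (hγ0 : 0 ≤ γ) (hγ1 : γ < 1)
    (c : S → A → S → ℝ)
    (π : S → A → ℝ) (hπ0 : ∀ s a, 0 ≤ π s a) (hπ1 : ∀ s, ∑ a, π s a = 1)
    (p p' : S → A → S → ℝ)
    (hp0 : ∀ s a s', 0 ≤ p s a s') (hp1 : ∀ s a, ∑ s', p s a s' = 1)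
    (hp'0 : ∀ s a s', 0 ≤ p' s a s') (hp'1 : ∀ s a, ∑ s', p' s a s' = 1)
    (ρ : S → ℝ) (hρ0 : ∀ s, 0 ≤ ρ s) (hρ1 : ∑ s, ρ s = 1) :
    Vrho γ ρ π p c - Vrho γ ρ π p' c =
      (1 / (1 - γ)) * ∑ s, dvisit γ ρ π p' s * ∑ a, π s a *
        ∑ s', (p s a s' - p' s a s') * (c s a s' + γ * Vf γ π p c s') := by
  simp only [Vrho, dvisit]
  have hM : StochMat (matPi π p) := matPi_stoch π hπ0 hπ1 p hp0 hp1
  have hM' : StochMat (matPi π p') := matPi_stoch π hπ0 hπ1 p' hp'0 hp'1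
  set V : S → ℝ := Vf γ π p c with hV
  set Δ : S → ℝ := fun s => ∑ a, π s a *
      ∑ s', (p s a s' - p' s a s') * (c s a s' + γ * V s') with hΔdef
  have hBell : ∀ s, V s = cPi π p c s + γ * (matPi π p).mulVec V s := fun s =>
    bellman hγ0 hγ1 hM (cPi π p c) s
  -- key expansion of Δ
  have key : ∀ s, Δ s = (V s - γ * (matPi π p').mulVec V s) - cPi π p' c s := by
    intro s
    have expand : (∑ a, π s a * ∑ s', (p s a s' - p' s a s') * (c s a s' + γ * V s'))
        = (cPi π p c s + γ * (matPi π p).mulVec V s)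
        - (cPi π p' c s + γ * (matPi π p').mulVec V s) := by
      rw [mulVec_matPi π p V s, mulVec_matPi π p' V s]
      simp only [cPi, Finset.mul_sum, ← Finset.sum_add_distrib, ← Finset.sum_sub_distrib]
      refine Finset.sum_congr rfl fun a _ => ?_
      exact Finset.sum_congr rfl fun s' _ => by ring
    have hDs : Δ s = ∑ a, π s a * ∑ s', (p s a s' - p' s a s') * (c s a s' + γ * V s') := rfl
    rw [hDs, expand, ← hBell s]; ring
  -- summabilities
  have hsumW : ∀ s, Summable (fun l => γ ^ l *
      (matPi π p' ^ l).mulVec (fun t => V t - γ * (matPi π p').mulVec V t) s) :=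
    fun s => summable_pow_mulVec hγ0 hγ1 hM' _ s
  have hsumC : ∀ s, Summable (fun l => γ ^ l * (matPi π p' ^ l).mulVec (cPi π p' c) s) :=
    fun s => summable_pow_mulVec hγ0 hγ1 hM' _ s
  have hsumΔ : ∀ s, Summable (fun l => γ ^ l * (matPi π p' ^ l).mulVec Δ s) :=
    fun s => summable_pow_mulVec hγ0 hγ1 hM' _ s
  -- key2: difference of values
  have key2 : ∀ s, V s - Vf γ π p' c s = ∑' l : ℕ, γ ^ l * (matPi π p' ^ l).mulVec Δ s := by
    intro s
    have hfun : ∀ l, γ ^ l * (matPi π p' ^ l).mulVec Δ s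
        = γ ^ l * (matPi π p' ^ l).mulVec (fun t => V t - γ * (matPi π p').mulVec V t) s
          - γ ^ l * (matPi π p' ^ l).mulVec (cPi π p' c) s := by
      intro l
      have : Δ = fun t => (V t - γ * (matPi π p').mulVec V t) - cPi π p' c t := funext key
      rw [this, mulVec_sub_pt]; ring
    calc V s - Vf γ π p' c s
        = (∑' l : ℕ, γ ^ l *
            (matPi π p' ^ l).mulVec (fun t => V t - γ * (matPi π p').mulVec V t) s)
          - ∑' l : ℕ, γ ^ l * (matPi π p' ^ l).mulVec (cPi π p' c) s := by
          rw [telescope hγ0 hγ1 hM' V s]; rfl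
      _ = ∑' l : ℕ, γ ^ l * (matPi π p' ^ l).mulVec Δ s := by
          rw [← Summable.tsum_sub (hsumW s) (hsumC s)]
          exact tsum_congr fun l => (hfun l).symm
  -- rearrange the RHS
  have hγne : (1 : ℝ) - γ ≠ 0 := by linarith
  have hl : ∀ l : ℕ, ∑ s, (γ ^ l * ∑ s₀, ρ s₀ * (matPi π p' ^ l) s₀ s) * Δ s
      = ∑ s₀, ρ s₀ * (γ ^ l * (matPi π p' ^ l).mulVec Δ s₀) := by
    intro l
    simp only [Matrix.mulVec, dotProduct, Finset.sum_mul, Finset.mul_sum]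
    rw [Finset.sum_comm]
    exact Finset.sum_congr rfl fun s₀ _ => Finset.sum_congr rfl fun s _ => by ring
  have hsumRow : ∀ s, Summable (fun l => (γ ^ l * ∑ s₀, ρ s₀ * (matPi π p' ^ l) s₀ s) * Δ s) := by
    intro s
    have : ∀ l, |(∑ s₀, ρ s₀ * (matPi π p' ^ l) s₀ s) * Δ s| ≤ |Δ s| := by
      intro l
      rw [abs_mul]
      refine mul_le_of_le_one_left (abs_nonneg _) ?_
      rw [abs_of_nonneg (Finset.sum_nonneg fun s₀ _ =>
        mul_nonneg (hρ0 s₀) ((stoch_pow hM' l).1 s₀ s))]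
      calc ∑ s₀, ρ s₀ * (matPi π p' ^ l) s₀ s ≤ ∑ s₀, ρ s₀ := by
            refine Finset.sum_le_sum fun s₀ _ => ?_
            exact mul_le_of_le_one_right (hρ0 s₀) (stoch_entry_le_one (stoch_pow hM' l) s₀ s)
        _ = 1 := hρ1
    have := summable_geom_bdd hγ0 hγ1 this
    simpa [mul_assoc] using this
  calc (∑ s, ρ s * V s) - ∑ s, ρ s * Vf γ π p' c s
      = ∑ s, ρ s * (V s - Vf γ π p' c s) := by
        rw [← Finset.sum_sub_distrib]
        exact Finset.sum_congr rfl fun s _ => by ring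
    _ = ∑ s₀, ρ s₀ * ∑' l : ℕ, γ ^ l * (matPi π p' ^ l).mulVec Δ s₀ := by
        exact Finset.sum_congr rfl fun s _ => by rw [key2 s]
    _ = ∑ s₀, ∑' l : ℕ, ρ s₀ * (γ ^ l * (matPi π p' ^ l).mulVec Δ s₀) := by
        exact Finset.sum_congr rfl fun s₀ _ => (tsum_mul_left).symm
    _ = ∑' l : ℕ, ∑ s₀, ρ s₀ * (γ ^ l * (matPi π p' ^ l).mulVec Δ s₀) := by
        exact (Summable.tsum_finsetSum fun s₀ _ => (hsumΔ s₀).mul_left (ρ s₀)).symm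
    _ = ∑' l : ℕ, ∑ s, (γ ^ l * ∑ s₀, ρ s₀ * (matPi π p' ^ l) s₀ s) * Δ s := by
        exact tsum_congr fun l => (hl l).symm
    _ = ∑ s, ∑' l : ℕ, (γ ^ l * ∑ s₀, ρ s₀ * (matPi π p' ^ l) s₀ s) * Δ s := by
        exact Summable.tsum_finsetSum fun s _ => hsumRow s
    _ = ∑ s, (∑' l : ℕ, γ ^ l * ∑ s₀, ρ s₀ * (matPi π p' ^ l) s₀ s) * Δ s := by
        exact Finset.sum_congr rfl fun s _ => tsum_mul_right
    _ = (1 / (1 - γ)) * ∑ s, ((1 - γ) * ∑' l : ℕ, γ ^ l * ∑ s₀, ρ s₀ * (matPi π p' ^ l) s₀ s) * Δ s := by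
        rw [Finset.mul_sum]
        refine Finset.sum_congr rfl fun s _ => ?_
        field_simp
end

section
/- Partial derivative for approximate TMA (direct parametrisation): fix a policy π and an initial distribution ρ. Regard the value V_{π,p}(ρ) = Σ_{s∈S} ρ(s)·((I − γM_{π,p})^{-1} c_{π,p})(s) as a function of the kernel entries (p(s'|s,a))_{(s,a,s') ∈ S×A×S} ∈ ℝ^{S×A×S}; this function is differentiable on the open set where I − γM_{π,p} is invertible, which contains every row-stochastic kernel. At any row-stochastic kernel p, its partial derivative with respect to the entry p(s'|s,a) equals (1/(1−γ))·d_ρ^{π,p}(s)·π(a|s)·(c(s,a,s') + γ·V_{π,p}(s')). -/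
open Finset

variable {S A : Type*}

/-- Expected one-step cost for a kernel given as a function of state–action–next-state
triples: `c_{π,q}(s) = Σ_a π(a|s) Σ_{s'} q(s,a,s') c(s,a,s')`. -/
noncomputable def cPiQ [Fintype S] [Fintype A] (π : S → A → ℝ) (c : S → A → S → ℝ)
    (q : S × A × S → ℝ) (s : S) : ℝ :=
  ∑ a, π s a * ∑ s', q (s, a, s') * c s a s'

/-- Induced state-transition matrix `M_{π,q}(s,s') = Σ_a π(a|s) q(s,a,s')`. -/
noncomputable def matQ [Fintype A] (π : S → A → ℝ) (q : S × A × S → ℝ) :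
    Matrix S S ℝ :=
  Matrix.of fun s s' => ∑ a, π s a * q (s, a, s')

/-- The value `V_{π,q}(ρ)` expressed through the resolvent formula
`Σ_s ρ(s) ((I - γ M_{π,q})⁻¹ c_{π,q})(s)`, as a function of the kernel entries
`q ∈ ℝ^{S×A×S}`. -/
noncomputable def Fval [Fintype S] [Fintype A] [DecidableEq S] (γ : ℝ) (ρ : S → ℝ)
    (π : S → A → ℝ) (c : S → A → S → ℝ) (q : S × A × S → ℝ) : ℝ :=
  ∑ s, ρ s * ((1 - γ • matQ π q)⁻¹.mulVec (cPiQ π c q)) s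

/-- Discounted value function `V_{π,q}(s) = Σ_l γ^l ((M_{π,q})^l c_{π,q})(s)`. -/
noncomputable def VfQ [Fintype S] [Fintype A] [DecidableEq S] (γ : ℝ) (π : S → A → ℝ)
    (c : S → A → S → ℝ) (q : S × A × S → ℝ) (s : S) : ℝ :=
  ∑' l : ℕ, γ ^ l * ((matQ π q ^ l).mulVec (cPiQ π c q)) s

/-- Discounted state visitation distribution
`d_ρ^{π,q}(s) = (1-γ) Σ_l γ^l Σ_{s₀} ρ(s₀) ((M_{π,q})^l)(s₀,s)`. -/
noncomputable def dvisitQ [Fintype S] [Fintype A] [DecidableEq S] (γ : ℝ) (ρ : S → ℝ)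
    (π : S → A → ℝ) (q : S × A × S → ℝ) (s : S) : ℝ :=
  (1 - γ) * ∑' l : ℕ, γ ^ l * ∑ s₀, ρ s₀ * (matQ π q ^ l) s₀ s

attribute [local instance] Matrix.linftyOpNormedRing Matrix.linftyOpNormedAlgebra

section AuxTMA
set_option linter.unusedSectionVars false
variable [Fintype S] [Fintype A] [DecidableEq S] [DecidableEq A]

/-- Evaluation of a matrix entry as a continuous linear map. -/
noncomputable def entryCLM (s₀ s₁ : S) : Matrix S S ℝ →L[ℝ] ℝ :=
  LinearMap.toContinuousLinearMap
    { toFun := fun M => M s₀ s₁, map_add' := fun _ _ => rfl, map_smul' := fun _ _ => rfl }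

@[simp] lemma entryCLM_apply (s₀ s₁ : S) (M : Matrix S S ℝ) : entryCLM s₀ s₁ M = M s₀ s₁ := rfl

/-- `matQ π` as a linear map in the kernel variable. -/
noncomputable def matL (π : S → A → ℝ) : (S × A × S → ℝ) →ₗ[ℝ] Matrix S S ℝ where
  toFun := matQ π
  map_add' q r := by
    ext s s'; simp [matQ, mul_add, Finset.sum_add_distrib]
  map_smul' t q := by
    ext s s'; simp [matQ, Finset.mul_sum, mul_left_comm]

lemma Fval_eq (γ : ℝ) (ρ : S → ℝ) (π : S → A → ℝ) (c : S → A → S → ℝ)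
    (q : S × A × S → ℝ) :
    Fval γ ρ π c q =
      ∑ s₀, ∑ s₁, ρ s₀ * (Ring.inverse (1 - γ • matQ π q) s₀ s₁ * cPiQ π c q s₁) := by
  simp [Fval, Matrix.mulVec, dotProduct, Matrix.nonsing_inv_eq_ringInverse,
    Finset.mul_sum]

lemma diff_at (γ : ℝ) (ρ : S → ℝ) (π : S → A → ℝ) (c : S → A → S → ℝ)
    (q : S × A × S → ℝ) (hq : IsUnit (1 - γ • matQ π q)) :
    DifferentiableAt ℝ (Fval γ ρ π c) q := by
  have hB : DifferentiableAt ℝ (fun q : S × A × S → ℝ => (1 : Matrix S S ℝ) - γ • matQ π q) q :=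
    (differentiableAt_const _).sub (((matL π).toContinuousLinearMap.differentiableAt).const_smul γ)
  have hInv : DifferentiableAt ℝ
      (fun q : S × A × S → ℝ => Ring.inverse ((1 : Matrix S S ℝ) - γ • matQ π q)) q :=
    by have := (differentiableAt_inverse (𝕜 := ℝ) hq).comp q hB; exact this
  have hc : ∀ s₁ : S, DifferentiableAt ℝ (fun q : S × A × S → ℝ => cPiQ π c q s₁) q := by
    intro s₁
    apply DifferentiableAt.fun_sum; intro a _
    apply DifferentiableAt.const_mul
    apply DifferentiableAt.fun_sum; intro s'' _
    exact ((ContinuousLinearMap.proj (s₁, a, s'') :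
      (S × A × S → ℝ) →L[ℝ] ℝ).differentiableAt).mul_const _
  have hFd : DifferentiableAt ℝ (fun q : S × A × S → ℝ =>
      ∑ s₀, ∑ s₁, ρ s₀ * (Ring.inverse (1 - γ • matQ π q) s₀ s₁ * cPiQ π c q s₁)) q := by
    apply DifferentiableAt.fun_sum; intro s₀ _
    apply DifferentiableAt.fun_sum; intro s₁ _
    apply DifferentiableAt.const_mul
    have hent : DifferentiableAt ℝ
        (fun q : S × A × S → ℝ => Ring.inverse ((1 : Matrix S S ℝ) - γ • matQ π q) s₀ s₁) q := by
      have := ((entryCLM s₀ s₁).differentiableAt).comp q hInv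
      exact this
    exact hent.mul (hc s₁)
  exact hFd.congr_of_eventuallyEq (Filter.Eventually.of_forall fun r => Fval_eq γ ρ π c r)

lemma norm_lt_one_of_stoch (γ : ℝ) (hγ0 : 0 ≤ γ) (hγ1 : γ < 1)
    (M : Matrix S S ℝ) (h0 : ∀ s₀ s₁, 0 ≤ M s₀ s₁) (h1 : ∀ s₀, ∑ s₁, M s₀ s₁ = 1) :
    ‖γ • M‖ < 1 := by
  have hM : ‖M‖ ≤ 1 := by
    rw [Matrix.linfty_opNorm_def]
    have hle : (Finset.univ.sup fun i : S => ∑ j, ‖M i j‖₊) ≤ 1 := by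
      apply Finset.sup_le; intro i _
      have hco : ((∑ j, ‖M i j‖₊ : NNReal) : ℝ) = 1 := by
        push_cast
        simp only [coe_nnnorm, Real.norm_eq_abs]
        rw [← h1 i]
        exact Finset.sum_congr rfl fun j _ => abs_of_nonneg (h0 i j)
      exact_mod_cast hco.le
    exact_mod_cast hle
  calc ‖γ • M‖ = γ * ‖M‖ := by rw [norm_smul, Real.norm_eq_abs, abs_of_nonneg hγ0]
    _ ≤ γ * 1 := by nlinarith [norm_nonneg M]
    _ < 1 := by linarith

lemma summable_entry (γ : ℝ) (M : Matrix S S ℝ) (h : ‖γ • M‖ < 1) (s₀ s₁ : S) :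
    Summable fun l : ℕ => γ ^ l * (M ^ l) s₀ s₁ := by
  have := (summable_geometric_of_norm_lt_one h).map (entryCLM s₀ s₁) (entryCLM s₀ s₁).continuous
  simpa [smul_pow, Matrix.smul_apply, smul_eq_mul, Function.comp_def] using this

lemma Binv_entry (γ : ℝ) (M : Matrix S S ℝ) (h : ‖γ • M‖ < 1) (s₀ s₁ : S) :
    Ring.inverse ((1 : Matrix S S ℝ) - γ • M) s₀ s₁ = ∑' l : ℕ, γ ^ l * (M ^ l) s₀ s₁ := by
  rw [← geom_series_eq_inverse _ h]
  have := (entryCLM s₀ s₁).map_tsum (summable_geometric_of_norm_lt_one h)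
  simp only [smul_pow, Matrix.smul_apply, smul_eq_mul, entryCLM_apply] at this ⊢
  exact this

lemma update_decomp (p : S × A × S → ℝ) (i : S × A × S) (t : ℝ) :
    Function.update p i t = fun j => p j + (t - p i) * (Pi.single i (1 : ℝ) : S × A × S → ℝ) j := by
  funext j
  by_cases h : j = i
  · subst h; simp
  · simp [Function.update_of_ne h, Pi.single_apply, h]

lemma matQ_add_mul (π : S → A → ℝ) (q e : S × A × S → ℝ) (x : ℝ) :
    matQ π (fun j => q j + x * e j) = matQ π q + x • matQ π e := by
  ext s₀ s₁
  simp [matQ, mul_add, Finset.sum_add_distrib, Finset.mul_sum, mul_left_comm]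

lemma cPiQ_add_mul (π : S → A → ℝ) (c : S → A → S → ℝ) (q e : S × A × S → ℝ) (x : ℝ)
    (s₁ : S) :
    cPiQ π c (fun j => q j + x * e j) s₁ = cPiQ π c q s₁ + x * cPiQ π c e s₁ := by
  simp only [cPiQ, add_mul, mul_add, Finset.sum_add_distrib, Finset.mul_sum]
  congr 1
  exact Finset.sum_congr rfl fun a _ => Finset.sum_congr rfl fun j _ => by ring

lemma matQ_single (π : S → A → ℝ) (s : S) (a : A) (s' : S) (s₀ s₁ : S) :
    matQ π (Pi.single (s, a, s') (1 : ℝ)) s₀ s₁ =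
      (if s₀ = s then π s a else 0) * (if s₁ = s' then (1:ℝ) else 0) := by
  simp only [matQ, Matrix.of_apply, Pi.single_apply, Prod.mk.injEq, mul_ite, mul_one, mul_zero]
  by_cases h1 : s₀ = s
  · by_cases h2 : s₁ = s'
    · subst h1; subst h2; simp
    · simp [h2]
  · simp [h1]

lemma cPiQ_single (π : S → A → ℝ) (c : S → A → S → ℝ) (s : S) (a : A) (s' : S) (s₁ : S) :
    cPiQ π c (Pi.single (s, a, s') (1 : ℝ)) s₁ =
      (if s₁ = s then (1:ℝ) else 0) * (π s a * c s a s') := by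
  simp only [cPiQ, Pi.single_apply, Prod.mk.injEq, ite_mul, one_mul, zero_mul]
  by_cases h1 : s₁ = s
  · subst h1; simp [ite_and, Finset.sum_ite_eq', mul_ite, mul_zero]
  · simp [h1]

lemma main_deriv (γ : ℝ) (ρ : S → ℝ) (π : S → A → ℝ) (c : S → A → S → ℝ)
    (p : S × A × S → ℝ) (hn : ‖γ • matQ π p‖ < 1) (s : S) (a : A) (s' : S) :
    HasDerivAt (fun t : ℝ => Fval γ ρ π c (Function.update p (s, a, s') t))
      ((∑ s₀, ρ s₀ * Ring.inverse ((1 : Matrix S S ℝ) - γ • matQ π p) s₀ s) * π s a *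
        (c s a s' + γ * ∑ s₁, Ring.inverse ((1 : Matrix S S ℝ) - γ • matQ π p) s' s₁ *
          cPiQ π c p s₁))
      (p (s, a, s')) := by
  obtain ⟨u, hu⟩ : IsUnit ((1 : Matrix S S ℝ) - γ • matQ π p) :=
    isUnit_one_sub_of_norm_lt_one hn
  set Binv : Matrix S S ℝ := Ring.inverse ((1 : Matrix S S ℝ) - γ • matQ π p) with hBinv
  set E : Matrix S S ℝ := matQ π (Pi.single (s, a, s') (1 : ℝ)) with hE
  set w : S → ℝ := cPiQ π c (Pi.single (s, a, s') (1 : ℝ)) with hw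
  have hup0 : Function.update p (s, a, s') (p (s, a, s')) = p := Function.update_eq_self _ _
  have hupdate : ∀ t : ℝ, (1 : Matrix S S ℝ) - γ • matQ π (Function.update p (s, a, s') t)
      = ((1 : Matrix S S ℝ) - γ • matQ π p) - (t - p (s, a, s')) • (γ • E) := by
    intro t
    rw [update_decomp, matQ_add_mul, hE]
    module
  have hcup : ∀ (t : ℝ) (s₁ : S), cPiQ π c (Function.update p (s, a, s') t) s₁
      = cPiQ π c p s₁ + (t - p (s, a, s')) * w s₁ := by
    intro t s₁; rw [update_decomp, cPiQ_add_mul, hw]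
  have hBt : HasDerivAt
      (fun t : ℝ => (1 : Matrix S S ℝ) - γ • matQ π (Function.update p (s, a, s') t))
      (-(γ • E)) (p (s, a, s')) := by
    have h1 := (((hasDerivAt_id (p (s, a, s'))).sub_const (p (s, a, s'))).smul_const
        (γ • E)).const_sub ((1 : Matrix S S ℝ) - γ • matQ π p)
    simp only [one_smul] at h1
    simp only [← hupdate, id_eq] at h1
    exact h1
  have hIt : HasDerivAt
      (fun t : ℝ => Ring.inverse ((1 : Matrix S S ℝ) - γ • matQ π (Function.update p (s, a, s') t)))
      (Binv * (γ • E) * Binv) (p (s, a, s')) := by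
    have hF := hasFDerivAt_ringInverse (𝕜 := ℝ) u
    rw [hu] at hF
    have hF' : HasFDerivAt Ring.inverse
        (-ContinuousLinearMap.mulLeftRight ℝ (Matrix S S ℝ) ↑u⁻¹ ↑u⁻¹)
        ((1 : Matrix S S ℝ) - γ • matQ π (Function.update p (s, a, s') (p (s, a, s')))) := by
      rw [hup0]; exact hF
    have h2 := hF'.comp_hasDerivAt (p (s, a, s')) hBt
    have hinv : (↑u⁻¹ : Matrix S S ℝ) = Binv := by rw [hBinv, ← hu, Ring.inverse_unit]
    simp [ContinuousLinearMap.neg_apply, ContinuousLinearMap.mulLeftRight_apply, hinv,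
      mul_neg, neg_mul, neg_neg, Function.comp] at h2 ⊢
    exact h2
  have hent : ∀ s₀ s₁ : S, HasDerivAt
      (fun t : ℝ =>
        Ring.inverse ((1 : Matrix S S ℝ) - γ • matQ π (Function.update p (s, a, s') t)) s₀ s₁)
      ((Binv * (γ • E) * Binv) s₀ s₁) (p (s, a, s')) := by
    intro s₀ s₁
    exact (entryCLM s₀ s₁).hasFDerivAt.comp_hasDerivAt (p (s, a, s')) hIt
  have hctd : ∀ s₁ : S, HasDerivAt
      (fun t : ℝ => cPiQ π c (Function.update p (s, a, s') t) s₁) (w s₁) (p (s, a, s')) := by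
    intro s₁
    have h1 := (((hasDerivAt_id (p (s, a, s'))).sub_const (p (s, a, s'))).mul_const
        (w s₁)).const_add (cPiQ π c p s₁)
    simp only [one_mul] at h1
    simpa only [← hcup, id_eq] using h1
  have hterm : ∀ s₀ s₁ : S, HasDerivAt
      (fun t : ℝ => ρ s₀ *
        (Ring.inverse ((1 : Matrix S S ℝ) - γ • matQ π (Function.update p (s, a, s') t)) s₀ s₁ *
          cPiQ π c (Function.update p (s, a, s') t) s₁))
      (ρ s₀ * ((Binv * (γ • E) * Binv) s₀ s₁ * cPiQ π c p s₁ + Binv s₀ s₁ * w s₁))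
      (p (s, a, s')) := by
    intro s₀ s₁
    have h1 := ((hent s₀ s₁).mul (hctd s₁)).const_mul (ρ s₀)
    rw [hup0] at h1
    exact h1
  have hsum : HasDerivAt
      (fun t : ℝ => ∑ s₀, ∑ s₁, ρ s₀ *
        (Ring.inverse ((1 : Matrix S S ℝ) - γ • matQ π (Function.update p (s, a, s') t)) s₀ s₁ *
          cPiQ π c (Function.update p (s, a, s') t) s₁))
      (∑ s₀, ∑ s₁, ρ s₀ * ((Binv * (γ • E) * Binv) s₀ s₁ * cPiQ π c p s₁ + Binv s₀ s₁ * w s₁))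
      (p (s, a, s')) :=
    HasDerivAt.fun_sum fun s₀ _ => HasDerivAt.fun_sum fun s₁ _ => hterm s₀ s₁
  have hFeq : (fun t : ℝ => Fval γ ρ π c (Function.update p (s, a, s') t))
      = fun t : ℝ => ∑ s₀, ∑ s₁, ρ s₀ *
        (Ring.inverse ((1 : Matrix S S ℝ) - γ • matQ π (Function.update p (s, a, s') t)) s₀ s₁ *
          cPiQ π c (Function.update p (s, a, s') t) s₁) :=
    funext fun t => Fval_eq γ ρ π c _
  rw [hFeq]
  convert hsum using 1
  have hK : ∀ s₀ s₁ : S, (Binv * (γ • E) * Binv) s₀ s₁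
      = γ * Binv s₀ s * π s a * Binv s' s₁ := by
    intro s₀ s₁
    simp only [Matrix.mul_apply, Matrix.smul_apply, hE, matQ_single, smul_eq_mul,
      mul_ite, mul_one, mul_zero, ite_mul, zero_mul, Finset.sum_ite_eq', Finset.mem_univ,
      if_true]
    simp only [Finset.sum_ite_irrel, Finset.sum_const_zero, Finset.sum_ite_eq',
      Finset.mem_univ, if_true, ite_mul, zero_mul]
    ring
  have hwc : ∀ s₀ : S, ∑ s₁, Binv s₀ s₁ * w s₁ = Binv s₀ s * (π s a * c s a s') := by
    intro s₀
    simp [hw, cPiQ_single, mul_ite, ite_mul, mul_zero, zero_mul, one_mul,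
      Finset.sum_ite_eq', Finset.mem_univ]
  calc (∑ s₀, ρ s₀ * Binv s₀ s) * π s a *
        (c s a s' + γ * ∑ s₁, Binv s' s₁ * cPiQ π c p s₁)
      = ∑ s₀, (ρ s₀ * Binv s₀ s * (γ * π s a) * (∑ s₁, Binv s' s₁ * cPiQ π c p s₁)
          + ρ s₀ * (Binv s₀ s * (π s a * c s a s'))) := by
        rw [Finset.sum_mul, Finset.sum_mul]
        exact Finset.sum_congr rfl fun s₀ _ => by ring
    _ = ∑ s₀, ∑ s₁, ρ s₀ * ((Binv * (γ • E) * Binv) s₀ s₁ * cPiQ π c p s₁ + Binv s₀ s₁ * w s₁) := by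
        refine Finset.sum_congr rfl fun s₀ _ => ?_
        simp only [hK, mul_add, Finset.sum_add_distrib]
        congr 1
        · rw [Finset.mul_sum]
          exact Finset.sum_congr rfl fun s₁ _ => by ring
        · rw [← Finset.mul_sum, hwc]

end AuxTMA

/-- Partial derivative for approximate TMA under the direct parametrisation: the value
`q ↦ V_{π,q}(ρ)` (resolvent formula) is differentiable wherever `I - γ M_{π,q}` is
invertible; this open set contains every row-stochastic kernel `p`, and at such a `p` the
partial derivative with respect to the entry `p(s'|s,a)` equals
`(1/(1-γ)) d_ρ^{π,p}(s) π(a|s) (c(s,a,s') + γ V_{π,p}(s'))`. -/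
theorem partial_derivative_approximate_tma
    [Fintype S] [Fintype A] [DecidableEq S] [DecidableEq A] [Nonempty S] [Nonempty A]
    (γ : ℝ) (hγ0 : 0 ≤ γ) (hγ1 : γ < 1)
    (ρ : S → ℝ) (hρ0 : ∀ s, 0 ≤ ρ s) (hρ1 : ∑ s, ρ s = 1)
    (c : S → A → S → ℝ)
    (π : S → A → ℝ) (hπ0 : ∀ s a, 0 ≤ π s a) (hπ1 : ∀ s, ∑ a, π s a = 1)
    (p : S × A × S → ℝ) (hp0 : ∀ i, 0 ≤ p i)
    (hp1 : ∀ s a, ∑ s', p (s, a, s') = 1) :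
    (∀ q : S × A × S → ℝ, IsUnit (1 - γ • matQ π q) →
      DifferentiableAt ℝ (Fval γ ρ π c) q) ∧
    IsUnit (1 - γ • matQ π p) ∧
    ∀ s a s', HasDerivAt
      (fun t : ℝ => Fval γ ρ π c (Function.update p (s, a, s') t))
      ((1 / (1 - γ)) * dvisitQ γ ρ π p s * π s a *
        (c s a s' + γ * VfQ γ π c p s'))
      (p (s, a, s')) := by
  have hM0 : ∀ s₀ s₁, 0 ≤ matQ π p s₀ s₁ := fun s₀ s₁ =>
    Finset.sum_nonneg fun b _ => mul_nonneg (hπ0 _ _) (hp0 _)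
  have hMrow : ∀ s₀, ∑ s₁, matQ π p s₀ s₁ = 1 := by
    intro s₀
    simp only [matQ, Matrix.of_apply]
    rw [Finset.sum_comm]
    have hrow : ∀ b, ∑ s₁, π s₀ b * p (s₀, b, s₁) = π s₀ b := fun b => by
      rw [← Finset.mul_sum, hp1, mul_one]
    rw [Finset.sum_congr rfl fun b _ => hrow b, hπ1]
  have hn : ‖γ • matQ π p‖ < 1 := norm_lt_one_of_stoch γ hγ0 hγ1 _ hM0 hMrow
  refine ⟨fun q hq => diff_at γ ρ π c q hq, isUnit_one_sub_of_norm_lt_one hn, ?_⟩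
  intro s a s'
  have hd : (1 / (1 - γ)) * dvisitQ γ ρ π p s
      = ∑ s₀, ρ s₀ * Ring.inverse ((1 : Matrix S S ℝ) - γ • matQ π p) s₀ s := by
    rw [dvisitQ, ← mul_assoc, one_div, inv_mul_cancel₀ (by linarith : (1:ℝ) - γ ≠ 0), one_mul]
    calc ∑' l : ℕ, γ ^ l * ∑ s₀, ρ s₀ * (matQ π p ^ l) s₀ s
        = ∑' l : ℕ, ∑ s₀, ρ s₀ * (γ ^ l * (matQ π p ^ l) s₀ s) := by
          refine tsum_congr fun l => ?_
          rw [Finset.mul_sum]; exact Finset.sum_congr rfl fun s₀ _ => by ring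
      _ = ∑ s₀, ∑' l : ℕ, ρ s₀ * (γ ^ l * (matQ π p ^ l) s₀ s) :=
          Summable.tsum_finsetSum fun s₀ _ => (summable_entry γ _ hn s₀ s).mul_left (ρ s₀)
      _ = ∑ s₀, ρ s₀ * Ring.inverse ((1 : Matrix S S ℝ) - γ • matQ π p) s₀ s := by
          refine Finset.sum_congr rfl fun s₀ _ => ?_
          rw [tsum_mul_left, Binv_entry γ _ hn]
  have hV : VfQ γ π c p s'
      = ∑ s₁, Ring.inverse ((1 : Matrix S S ℝ) - γ • matQ π p) s' s₁ * cPiQ π c p s₁ := by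
    rw [VfQ]
    calc ∑' l : ℕ, γ ^ l * ((matQ π p ^ l).mulVec (cPiQ π c p)) s'
        = ∑' l : ℕ, ∑ s₁, (γ ^ l * (matQ π p ^ l) s' s₁) * cPiQ π c p s₁ := by
          refine tsum_congr fun l => ?_
          simp [Matrix.mulVec, dotProduct, Finset.mul_sum, mul_assoc]
      _ = ∑ s₁, ∑' l : ℕ, (γ ^ l * (matQ π p ^ l) s' s₁) * cPiQ π c p s₁ :=
          Summable.tsum_finsetSum fun s₁ _ => (summable_entry γ _ hn s' s₁).mul_right _
      _ = _ := by
          refine Finset.sum_congr rfl fun s₁ _ => ?_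
          rw [tsum_mul_right, Binv_entry γ _ hn]
  rw [hd, hV]
  exact main_deriv γ ρ π c p hn s a s'
end

section
/- Pushback property of the mirror step: let E be a finite-dimensional real inner product space, D ⊆ E a convex set, h : E → ℝ convex and differentiable, and define the Bregman divergence B(x,y;h) := h(x) − h(y) − ⟨∇h(y), x − y⟩. Let f : E → ℝ be convex and differentiable, let α > 0 and y ∈ D, and suppose x* ∈ D satisfies f(x*) + α·B(x*,y;h) ≤ f(x) + α·B(x,y;h) for all x ∈ D (x* minimizes the mirror-descent objective over D). Then for every z ∈ D, f(x*) + α·B(x*,y;h) ≤ f(z) + α·(B(z,y;h) − B(z,x*;h)). -/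
open InnerProductSpace

/-- Derivative of `t ↦ φ (a + t • d)` for a differentiable `φ`. -/
lemma line_hasDerivAt {E : Type*} [NormedAddCommGroup E] [InnerProductSpace ℝ E]
    [CompleteSpace E] (φ : E → ℝ) (hφ : Differentiable ℝ φ) (a d : E) (t : ℝ) :
    HasDerivAt (fun s : ℝ => φ (a + s • d))
      (inner ℝ (gradient φ (a + t • d)) d : ℝ) t := by
  have hc : HasDerivAt (fun s : ℝ => a + s • d) d t := by
    simpa using ((hasDerivAt_id t).smul_const d).const_add a
  have hF : HasFDerivAt φ (InnerProductSpace.toDual ℝ E (gradient φ (a + t • d)))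
      (a + t • d) := by
    have := (hφ (a + t • d)).hasGradientAt
    exact hasGradientAt_iff_hasFDerivAt.mp this
  have := hF.comp_hasDerivAt t hc
  exact this

/-- Gradient inequality for a convex differentiable function. -/
lemma convex_grad_ineq {E : Type*} [NormedAddCommGroup E] [InnerProductSpace ℝ E]
    [CompleteSpace E] (φ : E → ℝ) (hconv : ConvexOn ℝ Set.univ φ) (hφ : Differentiable ℝ φ) (a b : E) :
    φ a + (inner ℝ (gradient φ a) (b - a) : ℝ) ≤ φ b := by
  set q : ℝ → ℝ := fun t => φ (a + t • (b - a)) with hq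
  have hqc : ConvexOn ℝ Set.univ q := by
    have := hconv.comp_affineMap (AffineMap.lineMap a b : ℝ →ᵃ[ℝ] E)
    have heq : q = φ ∘ (AffineMap.lineMap a b : ℝ →ᵃ[ℝ] E) := by
      funext t
      simp [hq, AffineMap.lineMap_apply_module', add_comm]
    rw [heq]
    simpa using this
  have hd : HasDerivAt q (inner ℝ (gradient φ (a + (0:ℝ) • (b - a))) (b - a) : ℝ) 0 :=
    line_hasDerivAt φ hφ a (b - a) 0
  simp only [zero_smul, add_zero] at hd
  have := hqc.le_slope_of_hasDerivAt (Set.mem_univ (0:ℝ)) (Set.mem_univ (1:ℝ))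
    zero_lt_one hd
  have hslope : slope q 0 1 = φ b - φ a := by
    simp [slope, hq]
  rw [hslope] at this
  linarith

/-- Pushback (three-point) property of the mirror step: in a finite-dimensional real inner
product space, if `h` and `f` are convex and differentiable, `B(x,y) = h x - h y - ⟪∇h y, x-y⟫`
is the Bregman divergence generated by `h`, and `x*` minimizes `f + α B(·, y)` over a convex
set `D ∋ y`, then for every `z ∈ D`,
`f x* + α B(x*,y) ≤ f z + α (B(z,y) - B(z,x*))`. -/
theorem pushback_property
    {E : Type*} [NormedAddCommGroup E] [InnerProductSpace ℝ E] [FiniteDimensional ℝ E]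
    (D : Set E) (hD : Convex ℝ D)
    (h : E → ℝ) (hconv : ConvexOn ℝ Set.univ h) (hdiff : Differentiable ℝ h)
    (B : E → E → ℝ)
    (hB : ∀ x y : E, B x y = h x - h y - (inner ℝ (gradient h y) (x - y) : ℝ))
    (f : E → ℝ) (fconv : ConvexOn ℝ Set.univ f) (fdiff : Differentiable ℝ f)
    (α : ℝ) (hα : 0 < α) (y : E) (hy : y ∈ D)
    (xstar : E) (hxstar : xstar ∈ D)
    (hmin : ∀ x ∈ D, f xstar + α * B xstar y ≤ f x + α * B x y) :
    ∀ z ∈ D, f xstar + α * B xstar y ≤ f z + α * (B z y - B z xstar) := by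
  intro z hz
  have : CompleteSpace E := FiniteDimensional.complete ℝ E
  set d : E := z - xstar with hdd
  set gy : E := gradient h y with hgy
  set gx : E := gradient h xstar with hgx
  set gf : E := gradient f xstar with hgf
  -- the mirror objective along the segment
  set g : ℝ → ℝ := fun t => f (xstar + t • d) + α * B (xstar + t • d) y with hg
  -- membership of segment points in D
  have hmem : ∀ t ∈ Set.Icc (0:ℝ) 1, xstar + t • d ∈ D := by
    intro t ht
    have : xstar + t • d = (1 - t) • xstar + t • z := by
      simp [hdd, smul_sub, sub_smul]; abel
    rw [this]
    exact hD hxstar hz (by linarith [ht.2]) ht.1 (by ring)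
  -- g 0 ≤ g t on [0,1]
  have hgmin : ∀ t ∈ Set.Icc (0:ℝ) 1, g 0 ≤ g t := by
    intro t ht
    have h0 : g 0 = f xstar + α * B xstar y := by simp [hg]
    rw [h0]
    exact hmin _ (hmem t ht)
  -- derivative of g at 0
  set K : ℝ := (inner ℝ gf d : ℝ) + α * ((inner ℝ gx d : ℝ) - (inner ℝ gy d : ℝ)) with hK
  have hgd : HasDerivAt g K 0 := by
    have hgeq : g = fun t => f (xstar + t • d)
        + α * (h (xstar + t • d) - h y - (inner ℝ gy (xstar - y) + t * (inner ℝ gy d : ℝ))) := by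
      funext t
      rw [hg]
      simp only
      rw [hB]
      have : (inner ℝ gy (xstar + t • d - y) : ℝ)
          = inner ℝ gy (xstar - y) + t * (inner ℝ gy d : ℝ) := by
        have heq : xstar + t • d - y = (xstar - y) + t • d := by abel
        rw [heq, inner_add_right, real_inner_smul_right]
      rw [this]
    rw [hgeq]
    have h1 : HasDerivAt (fun t : ℝ => f (xstar + t • d)) (inner ℝ gf d : ℝ) 0 := by
      have := line_hasDerivAt f fdiff xstar d 0
      simpa [hgf] using this
    have h2 : HasDerivAt (fun t : ℝ => h (xstar + t • d)) (inner ℝ gx d : ℝ) 0 := by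
      have := line_hasDerivAt h hdiff xstar d 0
      simpa [hgx] using this
    have h3 : HasDerivAt (fun t : ℝ =>
        h (xstar + t • d) - h y - (inner ℝ gy (xstar - y) + t * (inner ℝ gy d : ℝ)))
        ((inner ℝ gx d : ℝ) - (inner ℝ gy d : ℝ)) 0 := by
      have hlin : HasDerivAt (fun t : ℝ => (inner ℝ gy (xstar - y) : ℝ) + t * (inner ℝ gy d : ℝ))
          (inner ℝ gy d : ℝ) 0 := by
        simpa using (((hasDerivAt_id (0:ℝ)).mul_const (inner ℝ gy d : ℝ)).const_add
          (inner ℝ gy (xstar - y) : ℝ))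
      exact ((h2.sub_const (h y)).sub hlin)
    exact h1.add (h3.const_mul α)
  -- first-order optimality: K ≥ 0
  have hK0 : 0 ≤ K := by
    have htend : Filter.Tendsto (slope g 0) (nhdsWithin 0 (Set.Ioi 0)) (nhds K) := by
      have := hasDerivAt_iff_tendsto_slope.mp hgd
      exact this.mono_left (nhdsWithin_mono _ (fun x hx => ne_of_gt hx))
    refine ge_of_tendsto htend ?_
    filter_upwards [Ioo_mem_nhdsGT_of_mem (by norm_num : (0:ℝ) ∈ Set.Ico 0 1)] with t ht
    have hge : g 0 ≤ g t := hgmin t ⟨le_of_lt ht.1, le_of_lt ht.2⟩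
    have : slope g 0 t = (g t - g 0) / t := by simp [slope, div_eq_inv_mul]
    rw [this]
    exact div_nonneg (by linarith) (le_of_lt ht.1)
  -- gradient inequality for f
  have hf_ineq : f xstar + (inner ℝ gf d : ℝ) ≤ f z := by
    have := convex_grad_ineq f fconv fdiff xstar z
    simpa [hgf, hdd] using this
  -- algebra to conclude
  have e1 : (inner ℝ gy (z - y) : ℝ) = inner ℝ gy (xstar - y) + (inner ℝ gy d : ℝ) := by
    have : z - y = (xstar - y) + d := by rw [hdd]; abel
    rw [this, inner_add_right]
  rw [hB, hB, hB]
  rw [← hgy, ← hgx, ← hdd, e1]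
  nlinarith [hK0, hf_ineq, hα]
end
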